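/- For a reduced undirected s-t graph G (every vertex and edge lies on an s-t path, parallel edges allowed), every tracking edge set T ⊆ E contains at least one edge of every cycle of G; i.e., every tracking edge set is a feedback edge set. -/

import Mathlib

/-- An undirected multigraph: a type of edges together with an endpoints map
(parallel edges and loops are allowed). -/
structure Multigraph (V E : Type) where
  ends : E → Sym2 V

namespace Multigraph

variable {V E : Type}

/-- Walks in a multigraph. -/
inductive MWalk (M : Multigraph V E) : V → V → Type
  | nil (v : V) : MWalk M v v
  | cons {u v w : V} (e : E) (h : M.ends e = s(u, v)) (p : MWalk M v w) : MWalk M u w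

variable {M : Multigraph V E}

def MWalk.support : ∀ {u v : V}, MWalk M u v → List V
  | _, _, MWalk.nil v => [v]
  | u, _, MWalk.cons _ _ p => u :: p.support

def MWalk.edgeList : ∀ {u v : V}, MWalk M u v → List E
  | _, _, MWalk.nil _ => []
  | _, _, MWalk.cons e _ p => e :: p.edgeList

/-- A simple path: no repeated vertices. -/
def MWalk.IsMPath {u v : V} (p : MWalk M u v) : Prop := p.support.Nodup

/-- A cycle: a nonempty closed walk with no repeated edges and no repeated
vertices except the base vertex. -/
def MWalk.IsMCycle {v : V} (c : MWalk M v v) : Prop :=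
  c.edgeList ≠ [] ∧ c.edgeList.Nodup ∧ c.support.tail.Nodup

end Multigraph

open Multigraph

noncomputable def etrackSeq {E : Type} (T : Set E) (l : List E) : List E :=
  l.filter (fun e => @decide (e ∈ T) (Classical.propDecidable _))

/-- `T` is a tracking edge set: distinct `s`-`t` paths have distinct sequences of
`T`-edges along them. -/
def IsTrackingEdgeSet {V E : Type} (M : Multigraph V E) (s t : V) (T : Set E) : Prop :=
  ∀ p q : MWalk M s t, p.IsMPath → q.IsMPath →
    etrackSeq T p.edgeList = etrackSeq T q.edgeList → p = q

/-- Every vertex and edge lies on some `s`-`t` path. -/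
def MReduced {V E : Type} (M : Multigraph V E) (s t : V) : Prop :=
  (∀ v : V, ∃ p : MWalk M s t, p.IsMPath ∧ v ∈ p.support) ∧
  (∀ e : E, ∃ p : MWalk M s t, p.IsMPath ∧ e ∈ p.edgeList)


namespace Multigraph

variable {V E : Type} {M : Multigraph V E}

def MWalk.append : ∀ {u v w : V}, MWalk M u v → MWalk M v w → MWalk M u w
  | _, _, _, .nil _, q => q
  | _, _, _, .cons e h p, q => .cons e h (p.append q)

lemma MWalk.support_head : ∀ {u v : V} (p : MWalk M u v), p.support = u :: p.support.tail
  | _, _, .nil _ => rfl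
  | _, _, .cons _ _ _ => rfl

lemma MWalk.start_mem_support {u v : V} (p : MWalk M u v) : u ∈ p.support := by
  rw [p.support_head]; exact List.mem_cons_self

lemma MWalk.end_mem_support : ∀ {u v : V} (p : MWalk M u v), v ∈ p.support
  | _, _, .nil v => List.mem_singleton_self v
  | _, _, .cons _ _ p => List.mem_cons_of_mem _ p.end_mem_support

lemma MWalk.end_mem_support_tail : ∀ {u v : V} (p : MWalk M u v), u ≠ v → v ∈ p.support.tail
  | _, _, .nil _, h => absurd rfl h
  | _, _, .cons _ _ p, _ => by
      show _ ∈ (_ :: p.support).tail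
      simpa using p.end_mem_support

lemma MWalk.support_append : ∀ {u v w : V} (p : MWalk M u v) (q : MWalk M v w),
    (p.append q).support = p.support ++ q.support.tail
  | _, _, _, .nil _, q => by
      show q.support = _
      rw [q.support_head]; rfl
  | _, _, _, .cons e h p, q => by
      show _ :: (p.append q).support = _
      rw [p.support_append q]; rfl

lemma MWalk.edgeList_append : ∀ {u v w : V} (p : MWalk M u v) (q : MWalk M v w),
    (p.append q).edgeList = p.edgeList ++ q.edgeList
  | _, _, _, .nil _, q => rfl
  | _, _, _, .cons e h p, q => by
      show e :: (p.append q).edgeList = _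
      rw [p.edgeList_append q]; rfl

lemma MWalk.tail_support_append {u v w : V} (p : MWalk M u v) (q : MWalk M v w) :
    (p.append q).support.tail = p.support.tail ++ q.support.tail := by
  rw [support_append]
  conv_lhs => rw [p.support_head]
  rfl

lemma MWalk.mem_support_append {u v w : V} {x : V} (p : MWalk M u v) (q : MWalk M v w) :
    x ∈ (p.append q).support ↔ x ∈ p.support ∨ x ∈ q.support := by
  rw [support_append, List.mem_append]
  constructor
  · rintro (h | h)
    · exact Or.inl h
    · exact Or.inr (List.mem_of_mem_tail h)
  · rintro (h | h)
    · exact Or.inl h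
    · rw [q.support_head] at h
      rcases List.mem_cons.mp h with h | h
      · exact Or.inl (h ▸ p.end_mem_support)
      · exact Or.inr h

def MWalk.reverseAux : ∀ {u v w : V}, MWalk M u v → MWalk M u w → MWalk M v w
  | _, _, _, .nil _, q => q
  | _, _, _, .cons e h p, q => p.reverseAux (.cons e (h.trans (Sym2.eq_swap)) q)

def MWalk.reverse {u v : V} (p : MWalk M u v) : MWalk M v u := p.reverseAux (.nil u)

lemma MWalk.support_reverseAux : ∀ {u v w : V} (p : MWalk M u v) (q : MWalk M u w),
    (p.reverseAux q).support = p.support.reverse ++ q.support.tail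
  | _, _, _, .nil v, q => by
      show q.support = _
      rw [q.support_head]; rfl
  | _, _, _, .cons e h p, q => by
      show (p.reverseAux _).support = _
      rw [p.support_reverseAux]
      show _ ++ q.support = _
      rw [q.support_head]
      show _ = (_ :: p.support).reverse ++ _
      rw [List.reverse_cons, List.append_assoc]
      rfl

lemma MWalk.support_reverse {u v : V} (p : MWalk M u v) :
    p.reverse.support = p.support.reverse := by
  unfold MWalk.reverse
  rw [p.support_reverseAux]
  simp [MWalk.support]

lemma MWalk.edgeList_reverseAux : ∀ {u v w : V} (p : MWalk M u v) (q : MWalk M u w),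
    (p.reverseAux q).edgeList = p.edgeList.reverse ++ q.edgeList
  | _, _, _, .nil v, q => by
      show q.edgeList = _
      simp [MWalk.edgeList]
  | _, _, _, .cons e h p, q => by
      show (p.reverseAux _).edgeList = _
      rw [p.edgeList_reverseAux]
      show _ ++ (e :: q.edgeList) = (e :: p.edgeList).reverse ++ _
      rw [List.reverse_cons, List.append_assoc]
      rfl

lemma MWalk.edgeList_reverse {u v : V} (p : MWalk M u v) :
    p.reverse.edgeList = p.edgeList.reverse := by
  unfold MWalk.reverse
  rw [p.edgeList_reverseAux]
  simp [MWalk.edgeList]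

lemma MWalk.mem_support_of_mem_edgeList : ∀ {u v : V} (p : MWalk M u v) {e : E} {x y : V},
    e ∈ p.edgeList → M.ends e = s(x, y) → x ∈ p.support ∧ y ∈ p.support
  | _, _, .nil _, e, x, y, he, _ => by simp [MWalk.edgeList] at he
  | u, v, .cons f hf p, e, x, y, he, hxy => by
      show _ ∈ u :: p.support ∧ _ ∈ u :: p.support
      rcases (by simpa [MWalk.edgeList] using he : e = f ∨ e ∈ p.edgeList) with rfl | he'
      · rw [hxy] at hf
        rw [Sym2.eq_iff] at hf
        rcases hf with ⟨rfl, rfl⟩ | ⟨rfl, rfl⟩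
        · exact ⟨List.mem_cons_self, List.mem_cons_of_mem _ p.start_mem_support⟩
        · exact ⟨List.mem_cons_of_mem _ p.start_mem_support, List.mem_cons_self⟩
      · obtain ⟨h1, h2⟩ := p.mem_support_of_mem_edgeList he' hxy
        exact ⟨List.mem_cons_of_mem _ h1, List.mem_cons_of_mem _ h2⟩

lemma MWalk.ne_of_mem_edgeList_of_path : ∀ {u v : V} (p : MWalk M u v) {e : E} {x y : V},
    p.support.Nodup → e ∈ p.edgeList → M.ends e = s(x, y) → x ≠ y
  | _, _, .nil _, e, x, y, _, he, _ => by simp [MWalk.edgeList] at he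
  | u, v, .cons f hf p, e, x, y, hnd, he, hxy => by
      have hnd' : (u :: p.support).Nodup := hnd
      rcases (by simpa [MWalk.edgeList] using he : e = f ∨ e ∈ p.edgeList) with rfl | he'
      · rintro rfl
        rw [hxy] at hf
        rw [Sym2.eq_iff] at hf
        have hu : u ∉ p.support := (List.nodup_cons.mp hnd').1
        rcases hf with ⟨rfl, rfl⟩ | ⟨rfl, rfl⟩ <;> exact hu p.start_mem_support
      · exact p.ne_of_mem_edgeList_of_path (List.nodup_cons.mp hnd').2 he' hxy

lemma MWalk.edgeList_ne_nil : ∀ {u v : V} (p : MWalk M u v), u ≠ v → p.edgeList ≠ []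
  | _, _, .nil _, h => absurd rfl h
  | _, _, .cons e _ p, _ => by simp [MWalk.edgeList]

lemma MWalk.exists_split (S : Set V) : ∀ {u v : V} (p : MWalk M u v),
    (∃ x ∈ p.support, x ∈ S) →
    ∃ (a : V) (p1 : MWalk M u a) (p2 : MWalk M a v),
      p = p1.append p2 ∧ a ∈ S ∧ ∀ x ∈ p1.support, x ∈ S → x = a
  | _, _, .nil w, hex => by
      obtain ⟨x, hx, hxS⟩ := hex
      simp [MWalk.support] at hx
      subst hx
      exact ⟨x, .nil x, .nil x, rfl, hxS, by simp [MWalk.support]⟩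
  | u, v, .cons e h q, hex => by
      by_cases hu : u ∈ S
      · refine ⟨u, .nil u, .cons e h q, rfl, hu, ?_⟩
        intro x hx _
        simpa [MWalk.support] using hx
      · obtain ⟨x, hx, hxS⟩ := hex
        have hx' : x ∈ q.support := by
          rcases (by simpa [MWalk.support] using hx : x = u ∨ x ∈ q.support) with rfl | h'
          · exact absurd hxS hu
          · exact h'
        obtain ⟨a, q1, q2, heq, haS, hprop⟩ := MWalk.exists_split S q ⟨x, hx', hxS⟩
        refine ⟨a, .cons e h q1, q2, ?_, haS, ?_⟩
        · show MWalk.cons e h q = MWalk.cons e h (q1.append q2)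
          rw [← heq]
        · intro y hy hyS
          rcases (by simpa [MWalk.support] using hy : y = u ∨ y ∈ q1.support) with rfl | h'
          · exact absurd hyS hu
          · exact hprop y h' hyS

lemma MWalk.exists_split_at {u v : V} (p : MWalk M u v) {a : V} (ha : a ∈ p.support) :
    ∃ (p1 : MWalk M u a) (p2 : MWalk M a v), p = p1.append p2 := by
  obtain ⟨a', p1, p2, heq, ha', -⟩ := p.exists_split {x | x = a} ⟨a, ha, rfl⟩
  subst ha'
  exact ⟨p1, p2, heq⟩

end Multigraph

lemma etrackSeq_append {E : Type} (T : Set E) (l1 l2 : List E) :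
    etrackSeq T (l1 ++ l2) = etrackSeq T l1 ++ etrackSeq T l2 :=
  List.filter_append _ _

lemma etrackSeq_eq_nil {E : Type} (T : Set E) (l : List E) (h : ∀ e ∈ l, e ∉ T) :
    etrackSeq T l = [] := by
  unfold etrackSeq
  rw [List.filter_eq_nil_iff]
  intro e he
  simpa using h e he

theorem stmt10 {V E : Type} [Fintype V] [Fintype E] (M : Multigraph V E) (s t : V)
    (hred : MReduced M s t) (T : Set E) (hT : IsTrackingEdgeSet M s t T) :
    ∀ (v : V) (c : MWalk M v v), c.IsMCycle → ∃ e ∈ c.edgeList, e ∈ T := by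
  intro v c hc
  by_contra hcon
  push_neg at hcon
  obtain ⟨e0, he0c⟩ := List.exists_mem_of_ne_nil _ hc.1
  obtain ⟨u0, v0, hends⟩ : ∃ x y, M.ends e0 = s(x, y) :=
    Sym2.ind (fun x y => ⟨x, y, rfl⟩) (M.ends e0)
  obtain ⟨P, hP, he0P⟩ := hred.2 e0
  have hPnd : P.support.Nodup := hP
  have hu0v0 : u0 ≠ v0 := P.ne_of_mem_edgeList_of_path hPnd he0P hends
  obtain ⟨hu0P, hv0P⟩ := P.mem_support_of_mem_edgeList he0P hends
  obtain ⟨hu0c, hv0c⟩ := c.mem_support_of_mem_edgeList he0c hends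
  -- split P at a first cycle vertex
  obtain ⟨a, p1, p2, hPeq, haC, hp1prop⟩ :=
    P.exists_split {x | x ∈ c.support} ⟨u0, hu0P, hu0c⟩
  have hPsup : P.support = p1.support ++ p2.support.tail := by
    rw [hPeq, MWalk.support_append]
  rw [hPsup] at hPnd
  obtain ⟨hp1nd, hp2tnd, hd12⟩ := List.nodup_append'.mp hPnd
  have hap1 : a ∈ p1.support := p1.end_mem_support
  have hp2nd : p2.support.Nodup := by
    rw [p2.support_head]
    exact List.nodup_cons.mpr ⟨fun h => hd12 hap1 h, hp2tnd⟩
  -- split p2.reverse at a first cycle vertex (i.e. last cycle vertex of p2)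
  obtain ⟨b, r1, r2, hp2eq, hbC, hr1prop⟩ :=
    p2.reverse.exists_split {x | x ∈ c.support}
      ⟨a, by rw [MWalk.support_reverse]; exact List.mem_reverse.mpr p2.start_mem_support, haC⟩
  have hp2rev : p2.support.reverse = r1.support ++ r2.support.tail := by
    rw [← MWalk.support_reverse, hp2eq, MWalk.support_append]
  have hrevnd : (r1.support ++ r2.support.tail).Nodup := by
    rw [← hp2rev]; exact List.nodup_reverse.mpr hp2nd
  obtain ⟨hr1nd, hr2tnd, hdr⟩ := List.nodup_append'.mp hrevnd
  -- a and b are distinct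
  have hab : a ≠ b := by
    rintro rfl
    cases r2 with
    | nil _ =>
      have h2 : p2.support.reverse = r1.support := by
        simpa [MWalk.support] using hp2rev
      have hall : ∀ x ∈ P.support, x ∈ c.support → x = a := by
        intro x hx hxC
        rw [hPsup, List.mem_append] at hx
        rcases hx with hx | hx
        · exact hp1prop x hx hxC
        · have hx2 : x ∈ p2.support := List.mem_of_mem_tail hx
          rw [← List.mem_reverse, h2] at hx2
          exact hr1prop x hx2 hxC
      exact hu0v0 ((hall u0 hu0P hu0c).trans (hall v0 hv0P hv0c).symm)
    | cons e' h' r2' =>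
      exact hdr r1.end_mem_support (by simpa [MWalk.support] using r2'.end_mem_support)
  -- the tail part p3 of P after the last cycle vertex b
  set p3 := r1.reverse with hp3def
  have hp3sup : p3.support = r1.support.reverse := MWalk.support_reverse r1
  have hp3nd : p3.support.Nodup := by rw [hp3sup]; exact List.nodup_reverse.mpr hr1nd
  have hp3tnd : p3.support.tail.Nodup := by
    have h := hp3nd; rw [p3.support_head] at h; exact (List.nodup_cons.mp h).2
  have hp3prop : ∀ x ∈ p3.support, x ∈ c.support → x = b := by
    intro x hx
    rw [hp3sup, List.mem_reverse] at hx
    exact hr1prop x hx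
  have hbp3t : b ∉ p3.support.tail := by
    have h := hp3nd; rw [p3.support_head] at h; exact (List.nodup_cons.mp h).1
  have hp3subp2 : ∀ x ∈ p3.support, x ∈ p2.support := by
    intro x hx
    rw [hp3sup, List.mem_reverse] at hx
    rw [← List.mem_reverse, hp2rev]
    exact List.mem_append_left _ hx
  have hp3tsub : ∀ x ∈ p3.support.tail, x ∈ p2.support.tail := by
    intro x hx
    have hx1 : x ∈ p2.support := hp3subp2 x (List.mem_of_mem_tail hx)
    have hxa : x ≠ a := by
      intro h
      have hxC : x ∈ c.support := by rw [h]; exact haC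
      exact hab (h.symm.trans (hp3prop x (List.mem_of_mem_tail hx) hxC))
    rw [p2.support_head] at hx1
    rcases List.mem_cons.mp hx1 with h | h
    · exact absurd h hxa
    · exact h
  -- split the cycle at a and rotate
  obtain ⟨c1, c2, hceq⟩ := c.exists_split_at haC
  set c' := c2.append c1 with hc'def
  have hce : c.edgeList = c1.edgeList ++ c2.edgeList := by rw [hceq, MWalk.edgeList_append]
  have hc'e : c'.edgeList = c2.edgeList ++ c1.edgeList := MWalk.edgeList_append _ _
  have hperm : c'.edgeList.Perm c.edgeList := by
    rw [hce, hc'e]; exact List.perm_append_comm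
  have hc'end : c'.edgeList.Nodup := hperm.symm.nodup hc.2.1
  have hctail : c.support.tail = c1.support.tail ++ c2.support.tail := by
    rw [hceq, MWalk.tail_support_append]
  have hc'tnd : c'.support.tail.Nodup := by
    rw [MWalk.tail_support_append]
    have h := hc.2.2
    rw [hctail] at h
    exact List.perm_append_comm.nodup h
  have hmemc' : ∀ x, x ∈ c'.support ↔ x ∈ c.support := by
    intro x
    rw [hc'def, hceq, MWalk.mem_support_append, MWalk.mem_support_append]
    tauto
  have hbc' : b ∈ c'.support := (hmemc' b).mpr hbC
  -- split the rotated cycle at b into the two arcs A1 and A2'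
  obtain ⟨A1, A2', hc'eq⟩ := c'.exists_split_at hbc'
  have hc'tail2 : c'.support.tail = A1.support.tail ++ A2'.support.tail := by
    rw [hc'eq, MWalk.tail_support_append]
  rw [hc'tail2] at hc'tnd
  obtain ⟨hA1tnd, hA2tnd, hdA⟩ := List.nodup_append'.mp hc'tnd
  have hbA1t : b ∈ A1.support.tail := A1.end_mem_support_tail hab
  have haA2t : a ∈ A2'.support.tail := A2'.end_mem_support_tail hab.symm
  have hA1nd : A1.support.Nodup := by
    rw [A1.support_head]
    exact List.nodup_cons.mpr ⟨fun h => hdA h haA2t, hA1tnd⟩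
  have hA2'nd : A2'.support.Nodup := by
    rw [A2'.support_head]
    exact List.nodup_cons.mpr ⟨fun h => hdA hbA1t h, hA2tnd⟩
  set A2 := A2'.reverse with hA2def
  have hA2sup : A2.support = A2'.support.reverse := MWalk.support_reverse _
  have hA2nd : A2.support.Nodup := by rw [hA2sup]; exact List.nodup_reverse.mpr hA2'nd
  have hA2tnd2 : A2.support.tail.Nodup := by
    have h := hA2nd; rw [A2.support_head] at h; exact (List.nodup_cons.mp h).2
  have haA2t2 : a ∉ A2.support.tail := by
    have h := hA2nd; rw [A2.support_head] at h; exact (List.nodup_cons.mp h).1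
  have haA1t : a ∉ A1.support.tail := fun h => hdA h haA2t
  -- edge facts
  have hc'edge : c'.edgeList = A1.edgeList ++ A2'.edgeList := by
    rw [hc'eq, MWalk.edgeList_append]
  have hednd : (A1.edgeList ++ A2'.edgeList).Nodup := by rw [← hc'edge]; exact hc'end
  obtain ⟨-, -, hdE⟩ := List.nodup_append'.mp hednd
  have hsubE : ∀ e', e' ∈ A1.edgeList ∨ e' ∈ A2'.edgeList → e' ∈ c.edgeList := by
    intro e' h
    have h' : e' ∈ c'.edgeList := by rw [hc'edge, List.mem_append]; exact h
    exact hperm.mem_iff.mp h'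
  have hA1T : ∀ e' ∈ A1.edgeList, e' ∉ T := fun e' h => hcon e' (hsubE e' (Or.inl h))
  have hA2T : ∀ e' ∈ A2.edgeList, e' ∉ T := by
    intro e' h
    rw [hA2def, MWalk.edgeList_reverse, List.mem_reverse] at h
    exact hcon e' (hsubE e' (Or.inr h))
  have hA1ne : A1.edgeList ≠ [] := A1.edgeList_ne_nil hab
  -- support membership in the cycle
  have hA1subC : ∀ x ∈ A1.support, x ∈ c.support := by
    intro x hx
    exact (hmemc' x).mp (by rw [hc'eq, MWalk.mem_support_append]; exact Or.inl hx)
  have hA2subC : ∀ x ∈ A2.support, x ∈ c.support := by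
    intro x hx
    rw [hA2sup, List.mem_reverse] at hx
    exact (hmemc' x).mp (by rw [hc'eq, MWalk.mem_support_append]; exact Or.inr hx)
  -- the two replacement paths
  set Q1 := p1.append (A1.append p3) with hQ1def
  set Q2 := p1.append (A2.append p3) with hQ2def
  have hQ1sup : Q1.support = p1.support ++ (A1.support.tail ++ p3.support.tail) := by
    rw [hQ1def, MWalk.support_append, MWalk.tail_support_append]
  have hQ2sup : Q2.support = p1.support ++ (A2.support.tail ++ p3.support.tail) := by
    rw [hQ2def, MWalk.support_append, MWalk.tail_support_append]
  have hdA1p3 : A1.support.tail.Disjoint p3.support.tail := by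
    intro x hx hx'
    have hxC : x ∈ c.support := hA1subC x (List.mem_of_mem_tail hx)
    have hxb : x = b := hp3prop x (List.mem_of_mem_tail hx') hxC
    exact hbp3t (hxb ▸ hx')
  have hdA2p3 : A2.support.tail.Disjoint p3.support.tail := by
    intro x hx hx'
    have hxC : x ∈ c.support := hA2subC x (List.mem_of_mem_tail hx)
    have hxb : x = b := hp3prop x (List.mem_of_mem_tail hx') hxC
    exact hbp3t (hxb ▸ hx')
  have hd1A1 : p1.support.Disjoint (A1.support.tail ++ p3.support.tail) := by
    intro x hx hx'
    rcases List.mem_append.mp hx' with h | h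
    · have hxC : x ∈ c.support := hA1subC x (List.mem_of_mem_tail h)
      have hxa : x = a := hp1prop x hx hxC
      exact haA1t (hxa ▸ h)
    · exact hd12 hx (hp3tsub x h)
  have hd1A2 : p1.support.Disjoint (A2.support.tail ++ p3.support.tail) := by
    intro x hx hx'
    rcases List.mem_append.mp hx' with h | h
    · have hxC : x ∈ c.support := hA2subC x (List.mem_of_mem_tail h)
      have hxa : x = a := hp1prop x hx hxC
      exact haA2t2 (hxa ▸ h)
    · exact hd12 hx (hp3tsub x h)
  have hQ1nd : Q1.support.Nodup := by
    rw [hQ1sup]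
    exact List.nodup_append'.mpr ⟨hp1nd, List.nodup_append'.mpr ⟨hA1tnd, hp3tnd, hdA1p3⟩, hd1A1⟩
  have hQ2nd : Q2.support.Nodup := by
    rw [hQ2sup]
    exact List.nodup_append'.mpr ⟨hp1nd, List.nodup_append'.mpr ⟨hA2tnd2, hp3tnd, hdA2p3⟩, hd1A2⟩
  -- equal tracking sequences
  have hQ1e : Q1.edgeList = p1.edgeList ++ (A1.edgeList ++ p3.edgeList) := by
    rw [hQ1def, MWalk.edgeList_append, MWalk.edgeList_append]
  have hQ2e : Q2.edgeList = p1.edgeList ++ (A2.edgeList ++ p3.edgeList) := by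
    rw [hQ2def, MWalk.edgeList_append, MWalk.edgeList_append]
  have htrack : etrackSeq T Q1.edgeList = etrackSeq T Q2.edgeList := by
    rw [hQ1e, hQ2e, etrackSeq_append, etrackSeq_append, etrackSeq_append, etrackSeq_append,
        etrackSeq_eq_nil T _ hA1T, etrackSeq_eq_nil T _ hA2T]
  have hQeq : Q1 = Q2 := hT Q1 Q2 hQ1nd hQ2nd htrack
  -- but Q1 and Q2 are distinct
  have hEe : Q1.edgeList = Q2.edgeList := by rw [hQeq]
  rw [hQ1e, hQ2e] at hEe
  have heq2 : A1.edgeList ++ p3.edgeList = A2.edgeList ++ p3.edgeList :=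
    List.append_cancel_left hEe
  have hE : A1.edgeList = A2.edgeList := List.append_cancel_right heq2
  obtain ⟨e1, he1⟩ := List.exists_mem_of_ne_nil _ hA1ne
  have he1' : e1 ∈ A2'.edgeList := by
    have h := hE ▸ he1
    rw [hA2def, MWalk.edgeList_reverse, List.mem_reverse] at h
    exact h
  exact hdE he1 he1'
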